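/- Let g be a finite-dimensional Lie algebra with nondegenerate Ad-invariant symmetric bilinear form, g = g₊ ⊕ g₋ a splitting into Lie subalgebras with R = P₊ − P₋, and let F, H : g → ℝ be Ad-invariant functions (i.e. [∇F(X),X] = 0 = [∇H(X),X] for all X). Then the R-bracket {F,H}_R(X) := ⟨X, [∇F(X)₊, ∇H(X)₊] − [∇F(X)₋, ∇H(X)₋]⟩ vanishes for all X ∈ g. -/
import Mathlib


/-- With a splitting `g = g₊ ⊕ g₋` into Lie subalgebras and
`R = P₊ − P₋`, the R-bracket
`{F,H}_R(X) = ⟨X, [∇F(X)₊, ∇H(X)₊] − [∇F(X)₋, ∇H(X)₋]⟩`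
of two Ad-invariant functions vanishes for all `X`. -/
theorem R_bracket_of_invariants_vanishes
    {g : Type*} [NormedAddCommGroup g] [NormedSpace ℝ g]
    [LieRing g] [LieAlgebra ℝ g] [FiniteDimensional ℝ g]
    (B : LinearMap.BilinForm ℝ g)
    (hnd : B.Nondegenerate)
    (hsymm : ∀ X Y : g, B X Y = B Y X)
    (hinv : ∀ X Y Z : g, B ⁅X, Y⁆ Z = B X ⁅Y, Z⁆)
    (Pp Pm : g →ₗ[ℝ] g)
    (hsum : Pp + Pm = LinearMap.id)
    (hPp : Pp ∘ₗ Pp = Pp) (hPm : Pm ∘ₗ Pm = Pm)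
    (hPpPm : Pp ∘ₗ Pm = 0) (hPmPp : Pm ∘ₗ Pp = 0)
    (hsubp : ∀ x y : g, ⁅Pp x, Pp y⁆ ∈ LinearMap.range Pp)
    (hsubm : ∀ x y : g, ⁅Pm x, Pm y⁆ ∈ LinearMap.range Pm)
    (F H : g → ℝ) (gradF gradH : g → g)
    (hFdiff : Differentiable ℝ F) (hHdiff : Differentiable ℝ H)
    (hgradF : ∀ X v : g, fderiv ℝ F X v = B (gradF X) v)
    (hgradH : ∀ X v : g, fderiv ℝ H X v = B (gradH X) v)
    (hFadinv : ∀ X : g, ⁅gradF X, X⁆ = 0)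
    (hHadinv : ∀ X : g, ⁅gradH X, X⁆ = 0) :
    ∀ X : g, B X (⁅Pp (gradF X), Pp (gradH X)⁆ - ⁅Pm (gradF X), Pm (gradH X)⁆) = 0 := by
  intro X
  have r1 : ∀ u v : g, B X ⁅u, v⁆ = B u ⁅v, X⁆ :=
    fun u v => (hsymm X ⁅u, v⁆).trans (hinv u v X)
  have r2 : ∀ u v : g, B X ⁅u, v⁆ = B ⁅X, u⁆ v := fun u v => (hinv X u v).symm
  have c0 : ∀ w : g, B X ⁅w, w⁆ = 0 := by
    intro w
    have hw : ⁅w, w⁆ = ⁅(0 : g), (0 : g)⁆ := (lie_self w).trans (lie_self 0).symm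
    rw [hw, r1]
    simp
  have addl : ∀ u v w : g, B X ⁅u + v, w⁆ = B X ⁅u, w⁆ + B X ⁅v, w⁆ := by
    intro u v w
    rw [r1, map_add, LinearMap.add_apply, ← r1, ← r1]
  have addr : ∀ u v w : g, B X ⁅u, v + w⁆ = B X ⁅u, v⁆ + B X ⁅u, w⁆ := by
    intro u v w
    rw [r2, map_add, ← r2, ← r2]
  have skew : ∀ u v : g, B X ⁅u, v⁆ = -(B X ⁅v, u⁆) := by
    intro u v
    have h := c0 (u + v)
    rw [addl, addr, addr, c0, c0] at h
    linarith
  have k2 : ∀ u : g, B X ⁅u, gradH X⁆ = 0 := by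
    intro u; rw [hsymm, hinv, hHadinv X]; simp
  have k2' : ∀ u : g, B X ⁅u, gradF X⁆ = 0 := by
    intro u; rw [hsymm, hinv, hFadinv X]; simp
  have k1 : ∀ v : g, B X ⁅gradF X, v⁆ = 0 := by
    intro v; rw [skew, k2']; simp
  have hPp' : ∀ v : g, Pp v = v - Pm v := by
    intro v
    have h := congrArg (fun f : g →ₗ[ℝ] g => f v) hsum
    simp only [LinearMap.add_apply, LinearMap.id_apply] at h
    exact eq_sub_of_add_eq h
  have key : B X ⁅Pp (gradF X), Pp (gradH X)⁆ = B X ⁅Pm (gradF X), Pm (gradH X)⁆ := by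
    rw [r1, hPp' (gradF X), map_sub, LinearMap.sub_apply, ← r1, k1, ← r1, r2,
      hPp' (gradH X), map_sub, ← r2, k2, ← r2]
    ring
  rw [map_sub, key, sub_self]
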